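/- Let d be the Thompson metric on P(n), m ≥ 1, A₁,…,A_m invertible n×n complex matrices, and X₁,…,X_m, Y₁,…,Y_m ∈ P(n). Then d(Σᵢ Aᵢ* Xᵢ Aᵢ, Σᵢ Aᵢ* Yᵢ Aᵢ) ≤ maxᵢ d(Xᵢ, Yᵢ). -/

import Mathlib

open Matrix ComplexOrder

/-- W(A/B) = inf{δ > 0 : A ≤ δB} in the Loewner order on complex matrices. -/
noncomputable def W {n : ℕ} (A B : Matrix (Fin n) (Fin n) ℂ) : ℝ :=
  sInf {δ : ℝ | 0 < δ ∧ (δ • B - A).PosSemidef}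

/-- The Thompson metric d(A,B) = max{log W(A/B), log W(B/A)}. -/
noncomputable def thompsonDist {n : ℕ} (A B : Matrix (Fin n) (Fin n) ℂ) : ℝ :=
  max (Real.log (W A B)) (Real.log (W B A))

section Aux

variable {n : ℕ}

lemma aux_psd_smul {r : ℝ} (hr : 0 ≤ r) {Y : Matrix (Fin n) (Fin n) ℂ} (hY : Y.PosSemidef) :
    (r • Y).PosSemidef := by
  rw [posSemidef_iff_dotProduct_mulVec]
  constructor
  · show _ = _
    rw [conjTranspose_smul]
    simp [hY.1.eq]
  · intro x
    rw [smul_mulVec, dotProduct_smul]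
    exact smul_nonneg hr (hY.dotProduct_mulVec_nonneg x)

lemma aux_mono {X Y : Matrix (Fin n) (Fin n) ℂ} (hY : Y.PosSemidef) {a b : ℝ}
    (h : (a • Y - X).PosSemidef) (hab : a ≤ b) : (b • Y - X).PosSemidef := by
  have e : b • Y - X = (b - a) • Y + (a • Y - X) := by module
  rw [e]
  exact (aux_psd_smul (by linarith) hY).add h

lemma aux_sub_herm_psd {M : Matrix (Fin n) (Fin n) ℂ} (hM : M.IsHermitian) {C : ℝ}
    (hC : ∀ i, hM.eigenvalues i ≤ C) :
    (C • (1 : Matrix (Fin n) (Fin n) ℂ) - M).PosSemidef := by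
  set U : Matrix (Fin n) (Fin n) ℂ := (hM.eigenvectorUnitary : Matrix (Fin n) (Fin n) ℂ) with hU
  have hUU : U * star U = 1 := (Matrix.mem_unitaryGroup_iff).mp hM.eigenvectorUnitary.2
  have hdiag : (diagonal (fun i => ((C - hM.eigenvalues i : ℝ) : ℂ)))
      = C • (1 : Matrix (Fin n) (Fin n) ℂ) - diagonal (RCLike.ofReal ∘ hM.eigenvalues) := by
    ext i j
    by_cases h : i = j <;>
      simp [h, diagonal_apply, Matrix.smul_apply, Matrix.one_apply, Complex.real_smul,
        Complex.ofReal_sub]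
  have key : C • (1 : Matrix (Fin n) (Fin n) ℂ) - M
      = U * diagonal (fun i => ((C - hM.eigenvalues i : ℝ) : ℂ)) * star U := by
    rw [hdiag, Matrix.mul_sub, Matrix.sub_mul, Matrix.mul_smul, Matrix.mul_one,
      Matrix.smul_mul, hUU]
    conv_lhs => rw [hM.spectral_theorem]
    rfl
  rw [key, star_eq_conjTranspose]
  refine (PosSemidef.diagonal ?_).mul_mul_conjTranspose_same U
  intro i
  simp only [Pi.zero_apply]
  rw [Complex.zero_le_real]
  linarith [hC i]

lemma aux_herm_sub_psd {M : Matrix (Fin n) (Fin n) ℂ} (hM : M.IsHermitian) {c : ℝ}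
    (hc : ∀ i, c ≤ hM.eigenvalues i) :
    (M - c • (1 : Matrix (Fin n) (Fin n) ℂ)).PosSemidef := by
  set U : Matrix (Fin n) (Fin n) ℂ := (hM.eigenvectorUnitary : Matrix (Fin n) (Fin n) ℂ) with hU
  have hUU : U * star U = 1 := (Matrix.mem_unitaryGroup_iff).mp hM.eigenvectorUnitary.2
  have hdiag : (diagonal (fun i => ((hM.eigenvalues i - c : ℝ) : ℂ)))
      = diagonal (RCLike.ofReal ∘ hM.eigenvalues) - c • (1 : Matrix (Fin n) (Fin n) ℂ) := by
    ext i j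
    by_cases h : i = j <;>
      simp [h, diagonal_apply, Matrix.smul_apply, Matrix.one_apply, Complex.real_smul,
        Complex.ofReal_sub]
  have key : M - c • (1 : Matrix (Fin n) (Fin n) ℂ)
      = U * diagonal (fun i => ((hM.eigenvalues i - c : ℝ) : ℂ)) * star U := by
    rw [hdiag, Matrix.mul_sub, Matrix.sub_mul, Matrix.mul_smul, Matrix.mul_one,
      Matrix.smul_mul, hUU]
    conv_lhs => rw [hM.spectral_theorem]
    rfl
  rw [key, star_eq_conjTranspose]
  refine (PosSemidef.diagonal ?_).mul_mul_conjTranspose_same U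
  intro i
  simp only [Pi.zero_apply]
  rw [Complex.zero_le_real]
  linarith [hc i]

/-- The defining set of `W` is nonempty for positive definite matrices. -/
lemma aux_S_nonempty [Nonempty (Fin n)] {X Y : Matrix (Fin n) (Fin n) ℂ}
    (hX : X.PosDef) (hY : Y.PosDef) :
    ∃ δ : ℝ, 0 < δ ∧ (δ • Y - X).PosSemidef := by
  set C : ℝ := 1 + ∑ i, |hX.1.eigenvalues i| with hCdef
  have hC0 : 0 < C := by
    have : 0 ≤ ∑ i, |hX.1.eigenvalues i| := Finset.sum_nonneg fun i _ => abs_nonneg _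
    linarith
  have hC : ∀ i, hX.1.eigenvalues i ≤ C := by
    intro i
    have h1 : |hX.1.eigenvalues i| ≤ ∑ j, |hX.1.eigenvalues j| :=
      Finset.single_le_sum (f := fun j => |hX.1.eigenvalues j|)
        (fun j _ => abs_nonneg _) (Finset.mem_univ i)
    calc hX.1.eigenvalues i ≤ |hX.1.eigenvalues i| := le_abs_self _
      _ ≤ C := by rw [hCdef]; linarith
  set c : ℝ := Finset.univ.inf' Finset.univ_nonempty hY.1.eigenvalues with hcdef
  have hc0 : 0 < c := by
    rw [hcdef, Finset.lt_inf'_iff]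
    exact fun i _ => hY.eigenvalues_pos i
  have hc : ∀ i, c ≤ hY.1.eigenvalues i := fun i =>
    Finset.inf'_le _ (Finset.mem_univ i)
  refine ⟨C / c, div_pos hC0 hc0, ?_⟩
  have e : (C / c) • Y - X
      = (C / c) • (Y - c • (1 : Matrix (Fin n) (Fin n) ℂ))
        + (C • (1 : Matrix (Fin n) (Fin n) ℂ) - X) := by
    rw [smul_sub, smul_smul, div_mul_cancel₀ _ hc0.ne']
    module
  rw [e]
  exact (aux_psd_smul (le_of_lt (div_pos hC0 hc0)) (aux_herm_sub_psd hY.1 hc)).add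
    (aux_sub_herm_psd hX.1 hC)

lemma aux_W_pos [Nonempty (Fin n)] {X Y : Matrix (Fin n) (Fin n) ℂ}
    (hX : X.PosDef) (hY : Y.PosDef) : 0 < W X Y := by
  classical
  set x : Fin n → ℂ := fun _ => 1 with hx
  have hxne : x ≠ 0 := by
    intro h
    have := congrFun h (Classical.arbitrary (Fin n))
    simp [hx] at this
  have ha : 0 < RCLike.re (dotProduct (star x) (Y *ᵥ x)) := hY.re_dotProduct_pos hxne
  have hb : 0 < RCLike.re (dotProduct (star x) (X *ᵥ x)) := hX.re_dotProduct_pos hxne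
  set a := RCLike.re (dotProduct (star x) (Y *ᵥ x))
  set b := RCLike.re (dotProduct (star x) (X *ᵥ x))
  have hlb : ∀ δ ∈ {δ : ℝ | 0 < δ ∧ (δ • Y - X).PosSemidef}, b / a ≤ δ := by
    rintro δ ⟨hδ, hpsd⟩
    have h0 : 0 ≤ RCLike.re (dotProduct (star x) ((δ • Y - X) *ᵥ x)) :=
      hpsd.re_dotProduct_nonneg x
    have he : dotProduct (star x) ((δ • Y - X) *ᵥ x)
        = (δ : ℂ) * dotProduct (star x) (Y *ᵥ x) - dotProduct (star x) (X *ᵥ x) := by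
      rw [sub_mulVec, dotProduct_sub, smul_mulVec, dotProduct_smul, Complex.real_smul]
    rw [he] at h0
    have : 0 ≤ δ * a - b := by
      simpa [a, b, Complex.sub_re, Complex.mul_re, Complex.ofReal_re, Complex.ofReal_im,
        RCLike.re] using h0
    rw [div_le_iff₀ ha]
    linarith
  have hne : {δ : ℝ | 0 < δ ∧ (δ • Y - X).PosSemidef}.Nonempty := by
    obtain ⟨δ, h1, h2⟩ := aux_S_nonempty hX hY
    exact ⟨δ, h1, h2⟩
  calc (0 : ℝ) < b / a := div_pos hb ha
    _ ≤ W X Y := le_csInf hne hlb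

lemma aux_W_le {X Y : Matrix (Fin n) (Fin n) ℂ} {t : ℝ} (ht : 0 < t)
    (h : (t • Y - X).PosSemidef) : W X Y ≤ t :=
  csInf_le ⟨0, fun δ hδ => le_of_lt hδ.1⟩ ⟨ht, h⟩

/-- The infimum defining `W` is attained: `X ≤ W(X/Y) • Y`. -/
lemma aux_W_mem [Nonempty (Fin n)] {X Y : Matrix (Fin n) (Fin n) ℂ}
    (hX : X.PosDef) (hY : Y.PosDef) : ((W X Y) • Y - X).PosSemidef := by
  set S := {δ : ℝ | 0 < δ ∧ (δ • Y - X).PosSemidef} with hS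
  have hne : S.Nonempty := by
    obtain ⟨δ, h1, h2⟩ := aux_S_nonempty hX hY
    exact ⟨δ, h1, h2⟩
  have hbdd : BddBelow S := ⟨0, fun δ hδ => le_of_lt hδ.1⟩
  have hW : 0 < W X Y := aux_W_pos hX hY
  have hmemgt : ∀ δ : ℝ, W X Y < δ → (δ • Y - X).PosSemidef := by
    intro δ hδ
    obtain ⟨s, hs, hsδ⟩ := (csInf_lt_iff hbdd hne).mp hδ
    exact aux_mono hY.posSemidef hs.2 hsδ.le
  rw [posSemidef_iff_dotProduct_mulVec]
  constructor
  · have h1 : ((W X Y + 1) • Y - X).PosSemidef := hmemgt _ (by linarith)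
    have h2 : ((W X Y + 2) • Y - X).PosSemidef := hmemgt _ (by linarith)
    have e : (W X Y) • Y - X
        = (2 : ℝ) • ((W X Y + 1) • Y - X) - (((W X Y + 2) • Y - X)) := by
      module
    rw [e]
    exact ((aux_psd_smul (by norm_num) h1).1).sub h2.1
  · intro v
    have ha : 0 ≤ dotProduct (star v) (Y *ᵥ v) := hY.posSemidef.dotProduct_mulVec_nonneg v
    have hb : 0 ≤ dotProduct (star v) (X *ᵥ v) := hX.posSemidef.dotProduct_mulVec_nonneg v
    have he : ∀ δ : ℝ, dotProduct (star v) ((δ • Y - X) *ᵥ v)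
        = (δ : ℂ) * dotProduct (star v) (Y *ᵥ v) - dotProduct (star v) (X *ᵥ v) := by
      intro δ
      rw [sub_mulVec, dotProduct_sub, smul_mulVec, dotProduct_smul, Complex.real_smul]
    set a := dotProduct (star v) (Y *ᵥ v)
    set b := dotProduct (star v) (X *ᵥ v)
    have haim : a.im = 0 := (Complex.le_def.mp ha).2.symm
    have hbim : b.im = 0 := (Complex.le_def.mp hb).2.symm
    have hare : 0 ≤ a.re := (Complex.le_def.mp ha).1
    have hbre : 0 ≤ b.re := (Complex.le_def.mp hb).1
    have hkey : ∀ δ : ℝ, W X Y < δ → b.re ≤ δ * a.re := by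
      intro δ hδ
      have h0 : 0 ≤ dotProduct (star v) ((δ • Y - X) *ᵥ v) := (hmemgt δ hδ).dotProduct_mulVec_nonneg v
      rw [he δ] at h0
      have := (Complex.le_def.mp h0).1
      simpa [Complex.sub_re, Complex.mul_re, Complex.ofReal_re, Complex.ofReal_im, haim]
        using this
    have hfin : b.re ≤ W X Y * a.re := by
      by_contra hcon
      push_neg at hcon
      rcases eq_or_lt_of_le hare with hz | hpos
      · have := hkey (W X Y + 1) (by linarith)
        rw [← hz] at hcon this
        simp at this hcon
        linarith
      · have hδlt : W X Y < b.re / a.re := by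
          rw [lt_div_iff₀ hpos]
          linarith
        set δ := (W X Y + b.re / a.re) / 2
        have h1 : W X Y < δ := by dsimp [δ]; linarith
        have h2 : δ < b.re / a.re := by dsimp [δ]; linarith
        have := hkey δ h1
        have : b.re ≤ δ * a.re := this
        have hlt : δ * a.re < (b.re / a.re) * a.re := by
          exact mul_lt_mul_of_pos_right h2 hpos
        rw [div_mul_cancel₀ _ hpos.ne'] at hlt
        linarith
    rw [he (W X Y)]
    rw [Complex.le_def]
    constructor
    · simp only [Complex.sub_re, Complex.mul_re, Complex.ofReal_re, Complex.ofReal_im,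
        Complex.zero_re, haim]
      simp
      linarith
    · simp [Complex.sub_im, Complex.mul_im, haim, hbim]

lemma aux_conj_posdef {A X : Matrix (Fin n) (Fin n) ℂ} (hA : IsUnit A) (hX : X.PosDef) :
    (Aᴴ * X * A).PosDef := by
  refine posDef_iff_dotProduct_mulVec.mpr ⟨isHermitian_conjTranspose_mul_mul A hX.1, fun v hv => ?_⟩
  have hAv : A *ᵥ v ≠ 0 := by
    intro h
    have hinj := Matrix.mulVec_injective_iff_isUnit.mpr hA
    have : v = 0 := by
      apply hinj
      simp [h]
    exact hv this
  have : dotProduct (star v) ((Aᴴ * X * A) *ᵥ v)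
      = dotProduct (star (A *ᵥ v)) (X *ᵥ (A *ᵥ v)) := by
    rw [← mulVec_mulVec, ← mulVec_mulVec, dotProduct_mulVec (star v) Aᴴ, ← star_mulVec]
  rw [this]
  exact hX.dotProduct_mulVec_pos hAv

lemma aux_sum_posdef {m : ℕ} (hm : 0 < m) (A : Fin m → Matrix (Fin n) (Fin n) ℂ)
    (hA : ∀ i, IsUnit (A i)) (X : Fin m → Matrix (Fin n) (Fin n) ℂ)
    (hX : ∀ i, (X i).PosDef) : (∑ i, (A i)ᴴ * X i * A i).PosDef := by
  have hmv : ∀ v : Fin n → ℂ, (∑ i, (A i)ᴴ * X i * A i) *ᵥ v = ∑ i, ((A i)ᴴ * X i * A i) *ᵥ v := by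
    intro v
    ext j
    simp only [Matrix.mulVec, dotProduct, Finset.sum_apply, Matrix.sum_apply, Finset.sum_mul]
    rw [Finset.sum_comm]
  rw [posDef_iff_dotProduct_mulVec]
  constructor
  · exact Finset.sum_induction _ Matrix.IsHermitian (fun a b ha hb => ha.add hb)
      isHermitian_zero (fun i _ => (aux_conj_posdef (hA i) (hX i)).1)
  · intro v hv
    rw [hmv]
    have hd : star v ⬝ᵥ ∑ i, ((A i)ᴴ * X i * A i) *ᵥ v
        = ∑ i, star v ⬝ᵥ (((A i)ᴴ * X i * A i) *ᵥ v) := by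
      simp only [dotProduct, Finset.sum_apply, Finset.mul_sum]
      rw [Finset.sum_comm]
    rw [hd]
    refine Finset.sum_pos (fun i _ => (aux_conj_posdef (hA i) (hX i)).dotProduct_mulVec_pos hv) ?_
    exact ⟨⟨0, hm⟩, Finset.mem_univ _⟩

/-- One-sided key estimate. -/
lemma aux_key [Nonempty (Fin n)] {m : ℕ} (hm : 0 < m)
    (A : Fin m → Matrix (Fin n) (Fin n) ℂ) (hA : ∀ i, IsUnit (A i))
    (X Y : Fin m → Matrix (Fin n) (Fin n) ℂ)
    (hX : ∀ i, (X i).PosDef) (hY : ∀ i, (Y i).PosDef) :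
    Real.log (W (∑ i, (A i)ᴴ * X i * A i) (∑ i, (A i)ᴴ * Y i * A i)) ≤
      Finset.univ.sup' ⟨⟨0, hm⟩, Finset.mem_univ _⟩
        (fun i => thompsonDist (X i) (Y i)) := by
  set Mx := Finset.univ.sup' (⟨⟨0, hm⟩, Finset.mem_univ _⟩ : Finset.univ.Nonempty)
      (fun i => thompsonDist (X i) (Y i)) with hMx
  set t := Real.exp Mx with htdef
  have ht : 0 < t := Real.exp_pos _
  have hterm : ∀ i, ((t • Y i - X i)).PosSemidef := by
    intro i
    have hWpos : 0 < W (X i) (Y i) := aux_W_pos (hX i) (hY i)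
    have hlog1 : Real.log (W (X i) (Y i)) ≤ thompsonDist (X i) (Y i) := le_max_left _ _
    have hlog : Real.log (W (X i) (Y i)) ≤ Mx :=
      le_trans hlog1 (Finset.le_sup' (fun i => thompsonDist (X i) (Y i)) (Finset.mem_univ i))
    have hWle : W (X i) (Y i) ≤ t := by
      calc W (X i) (Y i) = Real.exp (Real.log (W (X i) (Y i))) := (Real.exp_log hWpos).symm
        _ ≤ t := Real.exp_le_exp.mpr hlog
    exact aux_mono (hY i).posSemidef (aux_W_mem (hX i) (hY i)) hWle
  have hsum : (t • (∑ i, (A i)ᴴ * Y i * A i) - ∑ i, (A i)ᴴ * X i * A i).PosSemidef := by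
    have e : t • (∑ i, (A i)ᴴ * Y i * A i) - ∑ i, (A i)ᴴ * X i * A i
        = ∑ i, (A i)ᴴ * (t • Y i - X i) * A i := by
      rw [Finset.smul_sum, ← Finset.sum_sub_distrib]
      congr 1
      ext i
      rw [Matrix.mul_sub, Matrix.sub_mul, Matrix.mul_smul, Matrix.smul_mul]
    rw [e]
    refine Finset.sum_induction _ _ (fun a b ha hb => ha.add hb) PosSemidef.zero ?_
    exact fun i _ => (hterm i).conjTranspose_mul_mul_same (A i)
  have hWsum : W (∑ i, (A i)ᴴ * X i * A i) (∑ i, (A i)ᴴ * Y i * A i) ≤ t :=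
    aux_W_le ht hsum
  have hWsumpos : 0 < W (∑ i, (A i)ᴴ * X i * A i) (∑ i, (A i)ᴴ * Y i * A i) :=
    aux_W_pos (aux_sum_posdef hm A hA X hX) (aux_sum_posdef hm A hA Y hY)
  calc Real.log (W (∑ i, (A i)ᴴ * X i * A i) (∑ i, (A i)ᴴ * Y i * A i))
      ≤ Real.log t := Real.log_le_log hWsumpos hWsum
    _ = Mx := Real.log_exp _

end Aux

/-- d(Σᵢ Aᵢ* Xᵢ Aᵢ, Σᵢ Aᵢ* Yᵢ Aᵢ) ≤ maxᵢ d(Xᵢ, Yᵢ) for invertible Aᵢ and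
positive definite Xᵢ, Yᵢ. -/
theorem stmt16 {n m : ℕ} (hm : 0 < m)
    (A : Fin m → Matrix (Fin n) (Fin n) ℂ) (hA : ∀ i, IsUnit (A i))
    (X Y : Fin m → Matrix (Fin n) (Fin n) ℂ)
    (hX : ∀ i, (X i).PosDef) (hY : ∀ i, (Y i).PosDef) :
    thompsonDist (∑ i, (A i)ᴴ * X i * A i) (∑ i, (A i)ᴴ * Y i * A i) ≤
      Finset.univ.sup' ⟨⟨0, hm⟩, Finset.mem_univ _⟩
        (fun i => thompsonDist (X i) (Y i)) := by
  rcases isEmpty_or_nonempty (Fin n) with hn | hn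
  · -- n = 0 : every `W` is `sInf (Set.Ioi 0) = 0`, every distance is 0
    have hWzero : ∀ P Q : Matrix (Fin n) (Fin n) ℂ, W P Q = 0 := by
      intro P Q
      have hset : {δ : ℝ | 0 < δ ∧ (δ • Q - P).PosSemidef} = Set.Ioi 0 := by
        ext δ
        simp only [Set.mem_setOf_eq, Set.mem_Ioi, and_iff_left_iff_imp]
        intro _
        have : (δ • Q - P) = 0 := Subsingleton.elim _ _
        rw [this]
        exact PosSemidef.zero
      rw [W, hset, csInf_Ioi]
    have hTzero : ∀ P Q : Matrix (Fin n) (Fin n) ℂ, thompsonDist P Q = 0 := by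
      intro P Q
      simp [thompsonDist, hWzero]
    rw [hTzero]
    refine Finset.le_sup'_of_le _ (Finset.mem_univ ⟨0, hm⟩) ?_
    rw [hTzero]
  · rw [thompsonDist]
    refine max_le (aux_key hm A hA X Y hX hY) ?_
    have h2 := aux_key hm A hA Y X hY hX
    have he : (fun i => thompsonDist (Y i) (X i)) = fun i => thompsonDist (X i) (Y i) := by
      funext i
      rw [thompsonDist, thompsonDist, max_comm]
    rw [he] at h2
    exact h2
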